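/- Let C be a nonzero finite-dimensional coalgebra over ℂ that is simple, i.e. the only subcoalgebras of C are 0 and C itself. Then the set of cocommutative elements of C, namely {c ∈ C : τ(Δ(c)) = Δ(c)} where τ : C ⊗ C → C ⊗ C is the flip x ⊗ y ↦ y ⊗ x, is a one-dimensional ℂ-linear subspace of C. -/

import Mathlib

open TensorProduct Module LinearMap

noncomputable section AuxForStmt0

set_option linter.unusedSectionVars false

lemma matrixCommSpan (n : ℕ) (hn : 0 < n) :
    Module.finrank ℂ (Submodule.span ℂ
      {x : Matrix (Fin n) (Fin n) ℂ | ∃ a b, x = a * b - b * a}) + 1 = n * n := by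
  classical
  set S : Set (Matrix (Fin n) (Fin n) ℂ) := {x | ∃ a b, x = a * b - b * a} with hS
  set L := Submodule.span ℂ S with hL
  set z : Fin n := ⟨0, hn⟩ with hz
  have hn' : (n : ℂ) ≠ 0 := by exact_mod_cast hn.ne'
  -- commutators have trace zero
  have htr : ∀ x ∈ L, Matrix.trace x = 0 := by
    intro x hx
    refine Submodule.span_induction ?_ (by simp) (fun a b _ _ ha hb => by
      simp [Matrix.trace_add, ha, hb]) (fun c a _ ha => by simp [ha]) hx
    rintro x ⟨a, b, rfl⟩
    simp [Matrix.trace_sub, Matrix.trace_mul_comm a b]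
  have hid : ∀ c : ℂ, (∑ k : Fin n, Matrix.single k k c) = c • 1 := by
    intro c
    ext a b
    rcases eq_or_ne a b with rfl | hab
    · simp [Matrix.single, Matrix.one_apply, Matrix.sum_apply, Finset.sum_ite_eq]
    · simp [Matrix.single, Matrix.one_apply, hab, Matrix.sum_apply,
        Finset.sum_ite_eq, Ne.symm hab]
      exact Finset.sum_eq_zero fun x _ => if_neg (by rintro ⟨rfl, rfl⟩; exact hab rfl)
  -- the identity together with L spans everything
  have hsup : L ⊔ Submodule.span ℂ {(1 : Matrix (Fin n) (Fin n) ℂ)} = ⊤ := by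
    rw [eq_top_iff]
    intro M _
    have hM := Matrix.matrix_eq_sum_single M
    rw [hM]
    refine Submodule.sum_mem _ fun i _ => Submodule.sum_mem _ fun j _ => ?_
    rcases eq_or_ne i j with rfl | hij
    · -- diagonal entries
      set c := M i i with hc
      have hcomm : ∀ k : Fin n, Matrix.single k k c -
          Matrix.single z z c ∈ L := by
        intro k
        refine Submodule.subset_span ⟨Matrix.single k z c,
          Matrix.single z k 1, ?_⟩
        rw [Matrix.single_mul_single_same, Matrix.single_mul_single_same]
        simp
      have hEzz : Matrix.single z z c ∈
          L ⊔ Submodule.span ℂ {(1 : Matrix (Fin n) (Fin n) ℂ)} := by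
        have key : Matrix.single z z c = (n : ℂ)⁻¹ •
            (c • (1 : Matrix (Fin n) (Fin n) ℂ) -
              ∑ k : Fin n, (Matrix.single k k c - Matrix.single z z c)) := by
          rw [Finset.sum_sub_distrib, hid c, Finset.sum_const, Finset.card_univ,
            Fintype.card_fin, sub_sub_cancel, ← Nat.cast_smul_eq_nsmul ℂ, smul_smul,
            inv_mul_cancel₀ hn', one_smul]
        rw [key]
        refine Submodule.smul_mem _ _ (Submodule.sub_mem _ ?_ ?_)
        · exact Submodule.mem_sup_right (Submodule.smul_mem _ _ (Submodule.mem_span_singleton_self _))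
        · exact Submodule.mem_sup_left (Submodule.sum_mem _ fun k _ => hcomm k)
      have hsplit : Matrix.single i i c =
          (Matrix.single i i c - Matrix.single z z c)
          + Matrix.single z z c := by abel
      rw [hsplit]
      exact Submodule.add_mem _ (Submodule.mem_sup_left (hcomm i)) hEzz
    · -- off-diagonal: commutator
      refine Submodule.mem_sup_left (Submodule.subset_span
        ⟨Matrix.single i i 1, Matrix.single i j (M i j), ?_⟩)
      rw [Matrix.single_mul_single_same]
      have h0 : Matrix.single i j (M i j) * Matrix.single i i (1:ℂ) = 0 :=
        Matrix.single_mul_single_of_ne _ _ _ _ hij.symm _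
      rw [h0]
      simp
  have hone : (1 : Matrix (Fin n) (Fin n) ℂ) ≠ 0 := by
    intro h
    have := congr_fun (congr_fun h z) z
    simp [Matrix.one_apply] at this
  have hinf : L ⊓ Submodule.span ℂ {(1 : Matrix (Fin n) (Fin n) ℂ)} = ⊥ := by
    rw [eq_bot_iff]
    rintro x ⟨hxL, hx1⟩
    obtain ⟨c, rfl⟩ := Submodule.mem_span_singleton.mp hx1
    have h := htr _ hxL
    simp only [Matrix.trace_smul, Matrix.trace_one, Fintype.card_fin, smul_eq_mul] at h
    rcases mul_eq_zero.mp h with rfl | h'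
    · simp
    · exact absurd h' hn'
  have h1 : finrank ℂ (Submodule.span ℂ {(1 : Matrix (Fin n) (Fin n) ℂ)}) = 1 :=
    finrank_span_singleton hone
  have h2 := Submodule.finrank_sup_add_finrank_inf_eq L
    (Submodule.span ℂ {(1 : Matrix (Fin n) (Fin n) ℂ)})
  rw [hsup, hinf, h1, finrank_top, finrank_bot] at h2
  have hm : finrank ℂ (Matrix (Fin n) (Fin n) ℂ) = n * n := by
    rw [Module.finrank_matrix]; simp
  omega


section schur
variable {A : Type*} [Ring A] [Module ℂ A] {V : Type*} [AddCommGroup V] [Module A V] [Module ℂ V]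
  [IsScalarTower ℂ A V] [SMulCommClass ℂ A V] [FiniteDimensional ℂ V] [IsSimpleModule A V]

lemma endoScalar (φ : V →ₗ[A] V) : ∃ c : ℂ, ∀ v : V, φ v = c • v := by
  haveI : Nontrivial V := IsSimpleModule.nontrivial A V
  haveI : SMulCommClass A ℂ V := SMulCommClass.symm ℂ A V
  obtain ⟨c, hc⟩ := Module.End.exists_eigenvalue (φ.restrictScalars ℂ : Module.End ℂ V)
  obtain ⟨v, hv⟩ := hc.exists_hasEigenvector
  refine ⟨c, ?_⟩
  have hψ : (φ - c • (LinearMap.id : V →ₗ[A] V)) = 0 := by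
    rcases (φ - c • (LinearMap.id : V →ₗ[A] V)).bijective_or_eq_zero with hb | h
    · exfalso
      have h0 : (φ - c • (LinearMap.id : V →ₗ[A] V)) v = 0 := by
        have := hv.apply_eq_smul
        simp only [LinearMap.sub_apply, LinearMap.smul_apply, LinearMap.id_apply]
        rw [show φ v = c • v from this]
        simp
      exact hv.right (hb.injective (by rw [h0, map_zero]))
    · exact h
  intro v'
  have := congrArg (fun ψ => ψ v') hψ
  simpa [sub_eq_zero] using this
end schur

lemma commSpanSimple (A : Type*) [Ring A] [Module ℂ A] [SMulCommClass ℂ A A]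
    [IsScalarTower ℂ A A] [FiniteDimensional ℂ A] [IsSimpleRing A] :
    Module.finrank ℂ (Submodule.span ℂ {x : A | ∃ a b : A, x = a * b - b * a}) + 1
      = Module.finrank ℂ A := by
  classical
  letI : Algebra ℂ A := Algebra.ofModule (fun r x y => smul_assoc r x y)
    (fun r x y => (smul_comm r x y).symm)
  obtain ⟨m, hm⟩ := Ideal.exists_maximal A
  set V := A ⧸ m with hV
  haveI : IsSimpleModule A V := (isSimpleModule_iff_isCoatom (m := m)).mpr hm.out
  haveI : Nontrivial V := IsSimpleModule.nontrivial A V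
  haveI : Module.Finite ℂ V :=
    Module.Finite.of_surjective ((m.mkQ).restrictScalars ℂ) (Submodule.mkQ_surjective m)
  haveI : SMulCommClass ℂ A V := by
    constructor
    intro c a v
    rw [← algebraMap_smul A c v, ← algebraMap_smul A c (a • v), ← mul_smul, ← mul_smul,
      Algebra.commutes]
  -- the representation
  set ρ : A →ₐ[ℂ] Module.End ℂ V := Algebra.lsmul ℂ ℂ V with hρ
  haveI : Nontrivial (Module.End ℂ V) := by
    obtain ⟨v, hv⟩ := exists_ne (0 : V)
    exact ⟨LinearMap.id, 0, fun h => hv (by simpa using congrArg (fun ψ => ψ v) h)⟩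
  have hinj : Function.Injective ρ := RingHom.injective (ρ.toRingHom)
  -- density: surjectivity
  set n := finrank ℂ V with hn
  have hnpos : 0 < n := finrank_pos
  set b := Module.finBasis ℂ V with hb
  have hsurj : Function.Surjective ρ := by
    intro f
    haveI : IsSemisimpleModule A (Fin n → V) := by
      refine isSemisimpleModule_of_isSemisimpleModule_submodule'
        (p := fun i => LinearMap.range (LinearMap.single A (fun _ : Fin n => V) i)) ?_
        (LinearMap.iSup_range_single A _)
      intro i
      have hinj1 : Function.Injective (LinearMap.single A (fun _ : Fin n => V) i) :=
        fun x y h => by simpa using congrFun h i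
      exact IsSemisimpleModule.congr (LinearEquiv.ofInjective _ hinj1).symm
    set w : Fin n → V := ⇑b with hw
    set N := Submodule.span A {w} with hN
    obtain ⟨N', hcompl⟩ := ComplementedLattice.exists_isCompl N
    set g : (Fin n → V) →ₗ[A] (Fin n → V) :=
      N.subtype ∘ₗ (N.linearProjOfIsCompl N' hcompl) with hg
    have hwN : w ∈ N := Submodule.mem_span_singleton_self w
    have hgw : g w = w := by
      have := Submodule.linearProjOfIsCompl_apply_left hcompl ⟨w, hwN⟩
      simp only [hg, LinearMap.comp_apply]
      rw [show (⟨w, hwN⟩ : N) = ⟨w, hwN⟩ from rfl] at this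
      erw [this]
      rfl
    have hrange : ∀ x, g x ∈ N := fun x => (N.linearProjOfIsCompl N' hcompl x).2
    -- matrix of scalars
    have hsc : ∀ i j : Fin n, ∃ c : ℂ, ∀ v : V,
        ((LinearMap.proj i) ∘ₗ g ∘ₗ (LinearMap.single A (fun _ : Fin n => V) j)) v = c • v :=
      fun i j => endoScalar _
    choose cm hcm using hsc
    have key : ∀ (x : Fin n → V) (i : Fin n), g x i = ∑ j, cm i j • x j := by
      intro x i
      conv_lhs => rw [← Finset.univ_sum_single x, map_sum]
      rw [Finset.sum_apply]
      refine Finset.sum_congr rfl fun j _ => ?_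
      have := hcm i j (x j)
      simpa using this
    have hfN : (fun i => f (w i)) ∈ N := by
      have h1 : g (fun i => f (w i)) = fun i => f (w i) := by
        funext i
        rw [key]
        have h2 : ∑ j, cm i j • f (w j) = f (∑ j, cm i j • w j) := by
          rw [map_sum]; simp only [map_smul]
        rw [h2]
        congr 1
        rw [← key w i, hgw]
      rw [← h1]
      exact hrange _
    obtain ⟨a, ha⟩ := Submodule.mem_span_singleton.mp hfN
    refine ⟨a, ?_⟩
    refine b.ext fun i => ?_
    exact congrFun ha i
  -- now transport the commutator span through the equivalence with matrices
  set E : A ≃ₐ[ℂ] Matrix (Fin n) (Fin n) ℂ :=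
    (AlgEquiv.ofBijective ρ ⟨hinj, hsurj⟩).trans (algEquivMatrix b) with hE
  set SA : Set A := {x : A | ∃ a b : A, x = a * b - b * a} with hSA
  set SM : Set (Matrix (Fin n) (Fin n) ℂ) := {x | ∃ a b, x = a * b - b * a} with hSM
  have himg : E '' SA = SM := by
    ext x
    constructor
    · rintro ⟨y, ⟨a, b', rfl⟩, rfl⟩
      exact ⟨E a, E b', by simp [map_mul]⟩
    · rintro ⟨a, b', rfl⟩
      exact ⟨E.symm a * E.symm b' - E.symm b' * E.symm a, ⟨E.symm a, E.symm b', rfl⟩,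
        by simp [map_mul]⟩
  have hmap : Submodule.map (E.toLinearEquiv : A →ₗ[ℂ] Matrix (Fin n) (Fin n) ℂ)
      (Submodule.span ℂ SA) = Submodule.span ℂ SM := by
    rw [Submodule.map_span]
    congr 1
  have hfr : finrank ℂ (Submodule.span ℂ SA) = finrank ℂ (Submodule.span ℂ SM) := by
    rw [← hmap]
    exact (LinearEquiv.finrank_map_eq E.toLinearEquiv _).symm
  have hA : finrank ℂ A = n * n := by
    rw [E.toLinearEquiv.finrank_eq, Module.finrank_matrix]; simp
  rw [hfr, hA]
  exact matrixCommSpan n hnpos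


namespace CoalgDual

variable {C : Type*} [AddCommGroup C] [Module ℂ C] [Coalgebra ℂ C]

/-- Pairing of two dual elements against comultiplication: convolution product. -/
def dmul (f g : Module.Dual ℂ C) : Module.Dual ℂ C :=
  (TensorProduct.dualDistrib ℂ C C (f ⊗ₜ g)) ∘ₗ Coalgebra.comul

lemma dmul_apply (f g : Module.Dual ℂ C) (c : C) :
    dmul f g c = TensorProduct.dualDistrib ℂ C C (f ⊗ₜ g) (Coalgebra.comul c) := rfl

instance : One (Module.Dual ℂ C) := ⟨Coalgebra.counit⟩
instance : Mul (Module.Dual ℂ C) := ⟨dmul⟩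

lemma mul_def (f g : Module.Dual ℂ C) : f * g = dmul f g := rfl
lemma one_def : (1 : Module.Dual ℂ C) = Coalgebra.counit := rfl

lemma mul_apply (f g : Module.Dual ℂ C) (c : C) :
    (f * g) c = TensorProduct.dualDistrib ℂ C C (f ⊗ₜ g) (Coalgebra.comul c) := rfl

lemma dmul_assoc (f g h : Module.Dual ℂ C) : (f * g) * h = f * (g * h) := by
  apply LinearMap.ext
  intro c
  -- claim1
  have claim1 : TensorProduct.dualDistrib ℂ C C ((f * g) ⊗ₜ h) =
      (TensorProduct.dualDistrib ℂ (C ⊗[ℂ] C) C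
        ((TensorProduct.dualDistrib ℂ C C (f ⊗ₜ g)) ⊗ₜ h)) ∘ₗ
        (Coalgebra.comul (R := ℂ) (A := C)).rTensor C := by
    apply TensorProduct.ext'
    intro x y
    simp [mul_apply]
  have claim2 : TensorProduct.dualDistrib ℂ C C (f ⊗ₜ (g * h)) =
      (TensorProduct.dualDistrib ℂ C (C ⊗[ℂ] C)
        (f ⊗ₜ (TensorProduct.dualDistrib ℂ C C (g ⊗ₜ h)))) ∘ₗ
        (Coalgebra.comul (R := ℂ) (A := C)).lTensor C := by
    apply TensorProduct.ext'
    intro x y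
    simp [mul_apply]
  have claim3 : TensorProduct.dualDistrib ℂ (C ⊗[ℂ] C) C
      ((TensorProduct.dualDistrib ℂ C C (f ⊗ₜ g)) ⊗ₜ h) =
      (TensorProduct.dualDistrib ℂ C (C ⊗[ℂ] C)
        (f ⊗ₜ (TensorProduct.dualDistrib ℂ C C (g ⊗ₜ h)))) ∘ₗ
        (TensorProduct.assoc ℂ C C C).toLinearMap := by
    apply TensorProduct.ext_threefold
    intro x y z
    simp [mul_assoc]
  calc ((f * g) * h) c
      = TensorProduct.dualDistrib ℂ C C ((f * g) ⊗ₜ h) (Coalgebra.comul c) := rfl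
    _ = TensorProduct.dualDistrib ℂ (C ⊗[ℂ] C) C
          ((TensorProduct.dualDistrib ℂ C C (f ⊗ₜ g)) ⊗ₜ h)
          ((Coalgebra.comul (R := ℂ) (A := C)).rTensor C (Coalgebra.comul c)) := by
        rw [claim1]; rfl
    _ = TensorProduct.dualDistrib ℂ C (C ⊗[ℂ] C)
          (f ⊗ₜ (TensorProduct.dualDistrib ℂ C C (g ⊗ₜ h)))
          ((TensorProduct.assoc ℂ C C C)
            ((Coalgebra.comul (R := ℂ) (A := C)).rTensor C (Coalgebra.comul c))) := by
        rw [claim3]; rfl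
    _ = TensorProduct.dualDistrib ℂ C (C ⊗[ℂ] C)
          (f ⊗ₜ (TensorProduct.dualDistrib ℂ C C (g ⊗ₜ h)))
          ((Coalgebra.comul (R := ℂ) (A := C)).lTensor C (Coalgebra.comul c)) := by
        rw [Coalgebra.coassoc_apply]
    _ = (f * (g * h)) c := (LinearMap.congr_fun claim2 (Coalgebra.comul c)).symm

lemma done_mul (f : Module.Dual ℂ C) : 1 * f = f := by
  apply LinearMap.ext
  intro c
  have claim : TensorProduct.dualDistrib ℂ C C ((1 : Module.Dual ℂ C) ⊗ₜ f) =
      (f ∘ₗ (TensorProduct.lid ℂ C).toLinearMap) ∘ₗ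
        (Coalgebra.counit (R := ℂ) (A := C)).rTensor C := by
    apply TensorProduct.ext'
    intro x y
    simp [one_def, smul_eq_mul]
  calc (1 * f) c = TensorProduct.dualDistrib ℂ C C ((1 : Module.Dual ℂ C) ⊗ₜ f)
        (Coalgebra.comul c) := rfl
    _ = f ((TensorProduct.lid ℂ C)
          ((Coalgebra.counit (R := ℂ) (A := C)).rTensor C (Coalgebra.comul c))) := by
        rw [claim]; rfl
    _ = f c := by rw [Coalgebra.rTensor_counit_comul]; simp

lemma dmul_one (f : Module.Dual ℂ C) : f * 1 = f := by
  apply LinearMap.ext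
  intro c
  have claim : TensorProduct.dualDistrib ℂ C C (f ⊗ₜ (1 : Module.Dual ℂ C)) =
      (f ∘ₗ (TensorProduct.rid ℂ C).toLinearMap) ∘ₗ
        (Coalgebra.counit (R := ℂ) (A := C)).lTensor C := by
    apply TensorProduct.ext'
    intro x y
    simp [one_def, smul_eq_mul, mul_comm]
  calc (f * 1) c = TensorProduct.dualDistrib ℂ C C (f ⊗ₜ (1 : Module.Dual ℂ C))
        (Coalgebra.comul c) := rfl
    _ = f ((TensorProduct.rid ℂ C)
          ((Coalgebra.counit (R := ℂ) (A := C)).lTensor C (Coalgebra.comul c))) := by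
        rw [claim]; rfl
    _ = f c := by rw [Coalgebra.lTensor_counit_comul]; simp

lemma dleft_distrib (f g h : Module.Dual ℂ C) : f * (g + h) = f * g + f * h := by
  apply LinearMap.ext
  intro c
  simp [mul_apply, tmul_add, map_add]

lemma dright_distrib (f g h : Module.Dual ℂ C) : (f + g) * h = f * h + g * h := by
  apply LinearMap.ext
  intro c
  simp [mul_apply, add_tmul, map_add]

lemma dzero_mul (f : Module.Dual ℂ C) : 0 * f = 0 := by
  apply LinearMap.ext
  intro c
  simp [mul_apply, zero_tmul]

lemma dmul_zero (f : Module.Dual ℂ C) : f * 0 = 0 := by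
  apply LinearMap.ext
  intro c
  simp [mul_apply, tmul_zero]

instance instRing : Ring (Module.Dual ℂ C) :=
  { (inferInstance : AddCommGroup (Module.Dual ℂ C)) with
    mul := dmul
    one := Coalgebra.counit
    mul_assoc := dmul_assoc
    one_mul := done_mul
    mul_one := dmul_one
    left_distrib := dleft_distrib
    right_distrib := dright_distrib
    zero_mul := dzero_mul
    mul_zero := dmul_zero }

lemma dsmul_mul (r : ℂ) (f g : Module.Dual ℂ C) : (r • f) * g = r • (f * g) := by
  apply LinearMap.ext
  intro c
  show (TensorProduct.dualDistrib ℂ C C ((r • f) ⊗ₜ g)) (Coalgebra.comul c)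
    = r • ((TensorProduct.dualDistrib ℂ C C (f ⊗ₜ g)) (Coalgebra.comul c))
  rw [← smul_tmul', map_smul]
  rfl

lemma dmul_smul (r : ℂ) (f g : Module.Dual ℂ C) : f * (r • g) = r • (f * g) := by
  apply LinearMap.ext
  intro c
  show (TensorProduct.dualDistrib ℂ C C (f ⊗ₜ (r • g))) (Coalgebra.comul c)
    = r • ((TensorProduct.dualDistrib ℂ C C (f ⊗ₜ g)) (Coalgebra.comul c))
  rw [tmul_smul, map_smul]
  rfl

instance : SMulCommClass ℂ (Module.Dual ℂ C) (Module.Dual ℂ C) :=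
  ⟨fun r f g => (dmul_smul r f g).symm⟩

instance : IsScalarTower ℂ (Module.Dual ℂ C) (Module.Dual ℂ C) :=
  ⟨fun r f g => dsmul_mul r f g⟩

section fd
variable [FiniteDimensional ℂ C]

/-- separation: dual pairs detect elements of `C ⊗ C`. -/
lemma sep {t : C ⊗[ℂ] C}
    (h : ∀ f g : Module.Dual ℂ C, TensorProduct.dualDistrib ℂ C C (f ⊗ₜ g) t = 0) :
    t = 0 := by
  have hall : ∀ s : Module.Dual ℂ C ⊗[ℂ] Module.Dual ℂ C,
      TensorProduct.dualDistrib ℂ C C s t = 0 := by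
    intro s
    induction s using TensorProduct.induction_on with
    | zero => simp
    | tmul f g => exact h f g
    | add x y hx hy => rw [map_add, LinearMap.add_apply, hx, hy, add_zero]
  rw [← Module.forall_dual_apply_eq_zero_iff ℂ t]
  intro φ
  set b := Module.finBasis ℂ C
  have hsurj := (TensorProduct.dualDistribEquivOfBasis b b).surjective
  obtain ⟨s, hs⟩ := hsurj φ
  have : TensorProduct.dualDistribEquivOfBasis b b s = TensorProduct.dualDistrib ℂ C C s := rfl
  rw [← hs, this, hall]

/-- if all pairings with functionals killing `D` (on either side) vanish, the tensor lies
in `D ⊗ D`. -/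
lemma memRangeMap {D : Submodule ℂ C} {t : C ⊗[ℂ] C}
    (h1 : ∀ f ∈ D.dualAnnihilator, ∀ g : Module.Dual ℂ C,
      TensorProduct.dualDistrib ℂ C C (f ⊗ₜ g) t = 0)
    (h2 : ∀ f ∈ D.dualAnnihilator, ∀ g : Module.Dual ℂ C,
      TensorProduct.dualDistrib ℂ C C (g ⊗ₜ f) t = 0) :
    t ∈ LinearMap.range (TensorProduct.map D.subtype D.subtype) := by
  obtain ⟨D', hc⟩ := Submodule.exists_isCompl D
  set pr := D.linearProjOfIsCompl D' hc with hpr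
  set p : C →ₗ[ℂ] C := D.subtype ∘ₗ pr with hp
  have hfix : ∀ d : C, d ∈ D → p d = d := fun d hd => by
    simp [hp]
    exact congrArg Subtype.val (Submodule.projectionOnto_apply_left hc ⟨d, hd⟩)
  have hann : ∀ f : Module.Dual ℂ C, f ∘ₗ (LinearMap.id - p) ∈ D.dualAnnihilator := by
    intro f
    rw [Submodule.mem_dualAnnihilator]
    intro d hd
    simp [hfix d hd]
  have hcomp : ∀ f g : Module.Dual ℂ C,
      TensorProduct.dualDistrib ℂ C C (f ⊗ₜ g) ∘ₗ TensorProduct.map p p =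
        TensorProduct.dualDistrib ℂ C C ((f ∘ₗ p) ⊗ₜ (g ∘ₗ p)) := by
    intro f g
    apply TensorProduct.ext'
    intro x y
    simp
  have hmain : TensorProduct.map p p t = t := by
    have hsplitf : ∀ f : Module.Dual ℂ C, f = f ∘ₗ p + f ∘ₗ (LinearMap.id - p) :=
      fun f => LinearMap.ext fun c => by simp
    have hz : TensorProduct.map p p t - t = 0 := by
      apply sep
      intro f g
      have e1 : TensorProduct.dualDistrib ℂ C C (f ⊗ₜ g) (TensorProduct.map p p t) =
          TensorProduct.dualDistrib ℂ C C ((f ∘ₗ p) ⊗ₜ (g ∘ₗ p)) t :=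
        LinearMap.congr_fun (hcomp f g) t
      have e3 : TensorProduct.dualDistrib ℂ C C (f ⊗ₜ g) t =
          TensorProduct.dualDistrib ℂ C C (f ⊗ₜ (g ∘ₗ p)) t := by
        conv_lhs => rw [hsplitf g]
        rw [tmul_add, map_add, LinearMap.add_apply, h2 _ (hann g) f, add_zero]
      have e2 : TensorProduct.dualDistrib ℂ C C (f ⊗ₜ (g ∘ₗ p)) t =
          TensorProduct.dualDistrib ℂ C C ((f ∘ₗ p) ⊗ₜ (g ∘ₗ p)) t := by
        conv_lhs => rw [hsplitf f]
        rw [add_tmul, map_add, LinearMap.add_apply, h1 _ (hann f) _, add_zero]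
      rw [map_sub, e1, ← e2, ← e3, sub_self]
    rw [sub_eq_zero] at hz
    exact hz
  refine ⟨TensorProduct.map pr pr t, ?_⟩
  have hcompm : TensorProduct.map D.subtype D.subtype ∘ₗ TensorProduct.map pr pr
      = TensorProduct.map p p := (TensorProduct.map_comp _ _ _ _).symm
  rw [← LinearMap.comp_apply, hcompm, hmain]

variable [Nontrivial C]

lemma counit_ne_zero : (Coalgebra.counit : Module.Dual ℂ C) ≠ 0 := by
  intro h
  obtain ⟨c, hc⟩ := exists_ne (0 : C)
  have h1 := Coalgebra.rTensor_counit_comul (R := ℂ) c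
  rw [h, LinearMap.rTensor_zero, LinearMap.zero_apply] at h1
  have h2 := congrArg (TensorProduct.lid ℂ C) h1
  rw [map_zero] at h2
  simp only [TensorProduct.lid_tmul, one_smul] at h2
  exact hc h2.symm

theorem isSimpleRing_dual
    (hsimple : ∀ D : Submodule ℂ C,
      (∀ x ∈ D, Coalgebra.comul (R := ℂ) x ∈
        LinearMap.range (TensorProduct.map D.subtype D.subtype)) →
      D = ⊥ ∨ D = ⊤) :
    IsSimpleRing (Module.Dual ℂ C) := by
  haveI : Nontrivial (Module.Dual ℂ C) := ⟨1, 0, counit_ne_zero⟩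
  constructor
  constructor
  intro I
  set J : Submodule ℂ (Module.Dual ℂ C) :=
    { carrier := I
      add_mem' := fun ha hb => I.add_mem ha hb
      zero_mem' := I.zero_mem
      smul_mem' := fun r f hf => by
        have : r • f = (r • (1 : Module.Dual ℂ C)) * f := by
          rw [dsmul_mul, one_mul]
        rw [this]
        exact I.mul_mem_left _ _ hf } with hJ
  have hmemJ : ∀ f : Module.Dual ℂ C, f ∈ J ↔ f ∈ I := fun _ => Iff.rfl
  have hannJ : J.dualCoannihilator.dualAnnihilator = J :=
    Subspace.dualCoannihilator_dualAnnihilator_eq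
  have hDsub : ∀ x ∈ J.dualCoannihilator, Coalgebra.comul (R := ℂ) x ∈
      LinearMap.range (TensorProduct.map J.dualCoannihilator.subtype
        J.dualCoannihilator.subtype) := by
    intro x hx
    apply memRangeMap
    · intro f hf g
      rw [hannJ, hmemJ] at hf
      have hfg : f * g ∈ I := I.mul_mem_right _ _ hf
      have := (Submodule.mem_dualCoannihilator x).mp hx (f * g) ((hmemJ _).mpr hfg)
      exact this
    · intro f hf g
      rw [hannJ, hmemJ] at hf
      have hfg : g * f ∈ I := I.mul_mem_left _ _ hf
      have := (Submodule.mem_dualCoannihilator x).mp hx (g * f) ((hmemJ _).mpr hfg)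
      exact this
  rcases hsimple J.dualCoannihilator hDsub with hD | hD
  · right
    have hJtop : J = ⊤ := by
      rw [← hannJ, hD, Submodule.dualAnnihilator_bot]
    apply TwoSidedIdeal.eq_top
    exact (hmemJ 1).mp (hJtop ▸ Submodule.mem_top)
  · left
    have hJbot : J = ⊥ := by
      rw [← hannJ, hD, Submodule.dualAnnihilator_top]
    rw [eq_bot_iff]
    intro x hx
    have hxJ : x ∈ J := (hmemJ x).mpr hx
    rw [hJbot] at hxJ
    rw [TwoSidedIdeal.mem_bot]
    simpa using hxJ

end fd

end CoalgDual

end AuxForStmt0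

open TensorProduct

/-- The cocommutative elements in a nonzero finite-dimensional simple
coalgebra over ℂ form a one-dimensional subspace. -/
theorem stmt_0 (C : Type*) [AddCommGroup C] [Module ℂ C] [FiniteDimensional ℂ C]
    [Nontrivial C] [Coalgebra ℂ C]
    (hsimple : ∀ D : Submodule ℂ C,
      (∀ x ∈ D, Coalgebra.comul (R := ℂ) x ∈
        LinearMap.range (TensorProduct.map D.subtype D.subtype)) →
      D = ⊥ ∨ D = ⊤) :
    Module.finrank ℂ
      (LinearMap.ker
        ((TensorProduct.comm ℂ C C).toLinearMap ∘ₗ Coalgebra.comul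
          - (Coalgebra.comul (R := ℂ) (A := C)))) = 1 := by
  classical
  haveI : IsSimpleRing (Module.Dual ℂ C) := CoalgDual.isSimpleRing_dual hsimple
  set L : Submodule ℂ (Module.Dual ℂ C) :=
    Submodule.span ℂ {x : Module.Dual ℂ C | ∃ a b : Module.Dual ℂ C, x = a * b - b * a} with hL
  have hflip : ∀ f g : Module.Dual ℂ C,
      TensorProduct.dualDistrib ℂ C C (f ⊗ₜ g) ∘ₗ (TensorProduct.comm ℂ C C).toLinearMap =
        TensorProduct.dualDistrib ℂ C C (g ⊗ₜ f) := by
    intro f g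
    apply TensorProduct.ext'
    intro x y
    simp [mul_comm]
  have hK : LinearMap.ker
      ((TensorProduct.comm ℂ C C).toLinearMap ∘ₗ Coalgebra.comul
        - (Coalgebra.comul (R := ℂ) (A := C))) = L.dualCoannihilator := by
    ext c
    rw [LinearMap.mem_ker, LinearMap.sub_apply, LinearMap.comp_apply,
      Submodule.mem_dualCoannihilator, sub_eq_zero]
    constructor
    · intro hc φ hφ
      refine Submodule.span_induction ?_ (by simp) (fun a b _ _ ha hb => by
        rw [LinearMap.add_apply, ha, hb, add_zero]) (fun r a _ ha => by
        rw [LinearMap.smul_apply, ha, smul_zero]) hφ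
      rintro ψ ⟨f, g, rfl⟩
      have h1 : (f * g) c = TensorProduct.dualDistrib ℂ C C (f ⊗ₜ g)
          (Coalgebra.comul c) := rfl
      have h2 : (g * f) c = TensorProduct.dualDistrib ℂ C C (g ⊗ₜ f)
          (Coalgebra.comul c) := rfl
      have h3 := LinearMap.congr_fun (hflip f g) (Coalgebra.comul (R := ℂ) c)
      rw [LinearMap.comp_apply] at h3
      rw [LinearMap.sub_apply, h1, h2, ← h3, hc, sub_self]
    · intro hc
      rw [← sub_eq_zero]
      apply CoalgDual.sep
      intro f g
      have h3 := LinearMap.congr_fun (hflip f g) (Coalgebra.comul (R := ℂ) c)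
      rw [LinearMap.comp_apply] at h3
      have hgen : (g * f - f * g : Module.Dual ℂ C) ∈ L :=
        Submodule.subset_span ⟨g, f, rfl⟩
      have h4 := hc _ hgen
      rw [LinearMap.sub_apply] at h4
      have h1 : (f * g) c = TensorProduct.dualDistrib ℂ C C (f ⊗ₜ g)
          (Coalgebra.comul c) := rfl
      have h2 : (g * f) c = TensorProduct.dualDistrib ℂ C C (g ⊗ₜ f)
          (Coalgebra.comul c) := rfl
      rw [map_sub, h3, ← h1, ← h2, h4]
  rw [hK]
  have hfd := Subspace.finrank_add_finrank_dualCoannihilator_eq L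
  have hcs : Module.finrank ℂ L + 1 = Module.finrank ℂ (Module.Dual ℂ C) :=
    commSpanSimple (Module.Dual ℂ C)
  have hd : Module.finrank ℂ (Module.Dual ℂ C) = Module.finrank ℂ C :=
    Subspace.dual_finrank_eq
  omega
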